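/- Let X be a metric space, G a compact metric topological group, and A : G × X → X a continuous group action of G on X by homeomorphisms. Let (C, d) be a metric compactification of X, i.e. a compact metric space together with a topological embedding e : X → C with dense image. Suppose that for every g ∈ G the map x ↦ A(g,x) extends continuously to C, i.e. there is a continuous map Âg : C → C with Âg ∘ e = e ∘ A(g,·) (such an extension is unique since e has dense image). Then the map Â : G × C → C, Â(g,c) = Âg(c), is a continuous group action of G on C: Â is jointly continuous, Â(e_G, c) = c for all c ∈ C, and Â(g h, c) = Â(g, Â(h, c)) for all g, h ∈ G and c ∈ C. -/

import Mathlib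

open Topology Filter
open MeasureTheory ENNReal

private lemma eq_of_dist_eq_on_dense {C : Type*} [MetricSpace C]
    {q : ℕ → C} (hq : DenseRange q) {a b : C}
    (h : ∀ j, dist a (q j) = dist b (q j)) : a = b := by
  by_contra hab
  have hpos : 0 < dist a b := dist_pos.2 hab
  obtain ⟨j, hj⟩ := hq.exists_dist_lt a (half_pos hpos)
  have : dist a b ≤ dist a (q j) + dist (q j) b := dist_triangle _ _ _
  rw [dist_comm (q j) b, ← h j] at this
  linarith

/-- **Extending group actions to metric compactifications.**
If a compact metric group `G` acts continuously on a metric space `X`, and `(C, d)`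
is a metric compactification of `X` (via a topological embedding `e : X → C` with
dense image) such that every map `A(g, ·)` extends continuously to a map
`Ahat g : C → C`, then `(g, c) ↦ Ahat g c` is a continuous group action of `G` on `C`. -/
theorem extend_group_action_to_metric_compactification
    {X : Type*} [MetricSpace X]
    {G : Type*} [MetricSpace G] [CompactSpace G] [Group G] [IsTopologicalGroup G]
    (A : G → X → X)
    (hA_cont : Continuous fun p : G × X => A p.1 p.2)
    (hA_one : ∀ x : X, A 1 x = x)
    (hA_mul : ∀ (g h : G) (x : X), A (g * h) x = A g (A h x))
    {C : Type*} [MetricSpace C] [CompactSpace C]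
    (e : X → C) (he : Topology.IsEmbedding e) (he_dense : DenseRange e)
    (Ahat : G → C → C)
    (hAhat_cont : ∀ g : G, Continuous (Ahat g))
    (hAhat_ext : ∀ (g : G) (x : X), Ahat g (e x) = e (A g x)) :
    Continuous (fun p : G × C => Ahat p.1 p.2) ∧
      (∀ c : C, Ahat 1 c = c) ∧
      (∀ (g h : G) (c : C), Ahat (g * h) c = Ahat g (Ahat h c)) := by
  classical
  -- the action identities, by density
  have hone : ∀ c : C, Ahat 1 c = c := by
    have : Ahat 1 = id := by
      refine Continuous.ext_on he_dense (hAhat_cont 1) continuous_id ?_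
      rintro c ⟨x, rfl⟩
      simp [hAhat_ext 1 x, hA_one x]
    intro c; exact congrFun this c
  have hmul : ∀ (g h : G) (c : C), Ahat (g * h) c = Ahat g (Ahat h c) := by
    intro g h
    have : Ahat (g * h) = fun c => Ahat g (Ahat h c) := by
      refine Continuous.ext_on he_dense (hAhat_cont (g * h))
        ((hAhat_cont g).comp (hAhat_cont h)) ?_
      rintro c ⟨x, rfl⟩
      simp [hAhat_ext, hA_mul g h x]
    intro c; exact congrFun this c
  refine ⟨?_, hone, hmul⟩
  -- each `Ahat g` is injective
  have hinj : ∀ g : G, Function.Injective (Ahat g) := by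
    intro g a b hab
    have h2 := congrArg (Ahat g⁻¹) hab
    rwa [← hmul, ← hmul, inv_mul_cancel, hone, hone] at h2
  -- trivial case: `C` empty
  rcases isEmpty_or_nonempty C with hC | hC
  · exact continuous_iff_continuousAt.mpr fun p => (IsEmpty.false p.2).elim
  -- set up measure theory on `G`
  borelize G
  borelize C
  set μ : Measure G := (MeasureTheory.Measure.haar (G := G)).inv with hμdef
  have hμ_ne : μ ≠ 0 := by
    intro h0
    have : (0 : ℝ≥0∞) < μ Set.univ :=
      IsOpen.measure_pos μ isOpen_univ ⟨1, trivial⟩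
    rw [h0] at this
    simp at this
  -- orbit maps are pointwise limits of continuous maps
  have horb : ∀ c : C, ∃ o : ℕ → G → C, (∀ m, Continuous (o m)) ∧
      ∀ h : G, Tendsto (fun m => o m h) atTop (𝓝 (Ahat h c)) := by
    intro c
    obtain ⟨xs, hxs_mem, hxs⟩ := mem_closure_iff_seq_limit.1 (he_dense c)
    choose x hx using hxs_mem
    refine ⟨fun m h => e (A h (x m)), fun m => ?_, fun h => ?_⟩
    · exact he.continuous.comp (hA_cont.comp (continuous_id.prodMk continuous_const))
    · have h1 : Tendsto (fun m => Ahat h (e (x m))) atTop (𝓝 (Ahat h c)) := by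
        refine ((hAhat_cont h).tendsto c).comp ?_
        have : (fun m => e (x m)) = xs := funext hx
        rw [this]; exact hxs
      simpa only [hAhat_ext] using h1
  have hmeas : ∀ c : C, Measurable fun h : G => Ahat h c := by
    intro c
    obtain ⟨o, ho_cont, ho_lim⟩ := horb c
    exact measurable_of_tendsto_metrizable (fun m => (ho_cont m).measurable)
      (tendsto_pi_nhds.2 ho_lim)
  -- diameter bound
  set D : ℝ := Metric.diam (Set.univ : Set C) with hDdef
  have hD : ∀ a b : C, dist a b ≤ D := fun a b =>
    Metric.dist_le_diam_of_mem isCompact_univ.isBounded trivial trivial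
  have hD0 : 0 ≤ D := Metric.diam_nonneg
  -- integrability of bounded measurable functions
  have hIntBdd : ∀ {F : G → ℝ}, Measurable F → ∀ {K : ℝ}, (∀ h, ‖F h‖ ≤ K) →
      Integrable F μ := by
    intro F hF K hK
    exact ⟨hF.aestronglyMeasurable, HasFiniteIntegral.of_bounded (ae_of_all μ hK)⟩
  -- measurability of the integrands we use
  have meas_dw : ∀ (z q : C) (v : G → ℝ), Measurable v →
      Measurable fun h : G => dist (Ahat h z) q * v h := by
    intro z q v hv
    exact ((hmeas z).dist measurable_const).mul hv
  -- change of variables using right invariance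
  have hchange : ∀ (z q : C) (w : G → ℝ) (s : G),
      (∫ h, dist (Ahat h (Ahat s z)) q * w h ∂μ)
        = ∫ u, dist (Ahat u z) q * w (u * s⁻¹) ∂μ := by
    intro z q w s
    have h1 : ∀ h : G, dist (Ahat h (Ahat s z)) q * w h
        = (fun u => dist (Ahat u z) q * w (u * s⁻¹)) (h * s) := by
      intro h
      simp only [← hmul, mul_inv_cancel_right]
    calc (∫ h, dist (Ahat h (Ahat s z)) q * w h ∂μ)
        = ∫ h, (fun u => dist (Ahat u z) q * w (u * s⁻¹)) (h * s) ∂μ := by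
          simp only [h1]
      _ = ∫ u, dist (Ahat u z) q * w (u * s⁻¹) ∂μ :=
          integral_mul_right_eq_self (μ := μ) (fun u => dist (Ahat u z) q * w (u * s⁻¹)) s
  -- THE KEY LEMMA: identification of limits
  have key : ∀ (g : G) (c : C) (gs : ℕ → G) (cs : ℕ → C) (d : C),
      Tendsto gs atTop (𝓝 g) → Tendsto cs atTop (𝓝 c) →
      Tendsto (fun n => Ahat (gs n) (cs n)) atTop (𝓝 d) → d = Ahat g c := by
    intro g c gs cs d hgs hcs hd
    -- main: all matrix coefficients of `d` and `Ahat g c` agree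
    have main : ∀ (q : C) (w : G → ℝ), Continuous w →
        (∫ h, dist (Ahat h d) q * w h ∂μ)
          = ∫ h, dist (Ahat h (Ahat g c)) q * w h ∂μ := by
      intro q w hw
      obtain ⟨Kw, hKw⟩ : ∃ K : ℝ, ∀ u : G, ‖w u‖ ≤ K := by
        obtain ⟨u₀, -, hu₀⟩ := isCompact_univ.exists_isMaxOn
          (Set.univ_nonempty) ((continuous_norm.comp hw).continuousOn)
        exact ⟨‖w u₀‖, fun u => hu₀ (Set.mem_univ u)⟩
      have hKw0 : 0 ≤ Kw := le_trans (norm_nonneg _) (hKw 1)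
      -- T1 : LHS of hchange along the sequence tends to coefficient of d
      have T1 : Tendsto (fun n => ∫ h, dist (Ahat h (Ahat (gs n) (cs n))) q * w h ∂μ)
          atTop (𝓝 (∫ h, dist (Ahat h d) q * w h ∂μ)) := by
        refine tendsto_integral_of_dominated_convergence (fun _ => D * Kw)
          (fun n => (meas_dw _ q w hw.measurable).aestronglyMeasurable)
          (integrable_const _) (fun n => ae_of_all μ fun h => ?_) (ae_of_all μ fun h => ?_)
        · rw [norm_mul, Real.norm_eq_abs (dist _ _), abs_of_nonneg dist_nonneg]
          exact mul_le_mul (hD _ _) (hKw h) (norm_nonneg _) hD0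
        · exact (Tendsto.dist (((hAhat_cont h).tendsto d).comp hd)
            tendsto_const_nhds).mul tendsto_const_nhds
      -- T3 : middle term tends to coefficient at c
      have T3 : Tendsto (fun n => ∫ u, dist (Ahat u (cs n)) q * w (u * g⁻¹) ∂μ)
          atTop (𝓝 (∫ u, dist (Ahat u c) q * w (u * g⁻¹) ∂μ)) := by
        have hwg : Measurable fun u : G => w (u * g⁻¹) :=
          (hw.comp (continuous_mul_right g⁻¹)).measurable
        refine tendsto_integral_of_dominated_convergence (fun _ => D * Kw)
          (fun n => (meas_dw _ q _ hwg).aestronglyMeasurable)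
          (integrable_const _) (fun n => ae_of_all μ fun u => ?_) (ae_of_all μ fun u => ?_)
        · rw [norm_mul, Real.norm_eq_abs (dist _ _), abs_of_nonneg dist_nonneg]
          exact mul_le_mul (hD _ _) (hKw _) (norm_nonneg _) hD0
        · exact (Tendsto.dist (((hAhat_cont u).tendsto c).comp hcs)
            tendsto_const_nhds).mul tendsto_const_nhds
      -- integrability of the pieces
      have hbn_int : ∀ n, Integrable (fun u => dist (Ahat u (cs n)) q * w (u * g⁻¹)) μ := by
        intro n
        refine hIntBdd (meas_dw _ q _ ((hw.comp (continuous_mul_right g⁻¹)).measurable))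
          (K := D * Kw) ?_
        intro u
        rw [norm_mul, Real.norm_eq_abs (dist _ _), abs_of_nonneg dist_nonneg]
        exact mul_le_mul (hD _ _) (hKw _) (norm_nonneg _) hD0
      have hen_int : ∀ n, Integrable
          (fun u => dist (Ahat u (cs n)) q * (w (u * (gs n)⁻¹) - w (u * g⁻¹))) μ := by
        intro n
        have hv : Measurable fun u : G => w (u * (gs n)⁻¹) - w (u * g⁻¹) :=
          ((hw.comp (continuous_mul_right (gs n)⁻¹)).measurable).sub
            ((hw.comp (continuous_mul_right g⁻¹)).measurable)
        refine hIntBdd (meas_dw _ q _ hv) (K := D * (Kw + Kw)) ?_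
        intro u
        rw [norm_mul, Real.norm_eq_abs (dist _ _), abs_of_nonneg dist_nonneg]
        refine mul_le_mul (hD _ _) ?_ (norm_nonneg _) hD0
        exact (norm_sub_le _ _).trans (add_le_add (hKw _) (hKw _))
      -- T4 : error term tends to 0
      have T4 : Tendsto (fun n => ∫ u, dist (Ahat u (cs n)) q *
          (w (u * (gs n)⁻¹) - w (u * g⁻¹)) ∂μ) atTop (𝓝 0) := by
        rw [Metric.tendsto_atTop]
        intro ε hε
        -- uniform continuity of (u,s) ↦ w (u * s)
        have hWuc : UniformContinuous fun p : G × G => w (p.1 * p.2) :=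
          CompactSpace.uniformContinuous_of_continuous (hw.comp continuous_mul)
        set M : ℝ := D * (μ Set.univ).toReal + 1 with hMdef
        have ht0 : (0 : ℝ) ≤ (μ Set.univ).toReal := ENNReal.toReal_nonneg
        have hM0 : 0 < M := by positivity
        obtain ⟨δ, hδ0, hδ⟩ := Metric.uniformContinuous_iff.1 hWuc (ε / (2 * M))
          (by positivity)
        have hginv : Tendsto (fun n => (gs n)⁻¹) atTop (𝓝 g⁻¹) :=
          (continuous_inv.tendsto g).comp hgs
        obtain ⟨N, hN⟩ := (Metric.tendsto_atTop.1 hginv) δ hδ0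
        refine ⟨N, fun n hn => ?_⟩
        have hwsmall : ∀ u : G, ‖w (u * (gs n)⁻¹) - w (u * g⁻¹)‖ ≤ ε / (2 * M) := by
          intro u
          have hdist : dist ((u, (gs n)⁻¹) : G × G) (u, g⁻¹) < δ := by
            rw [Prod.dist_eq]
            simp only [dist_self]
            rw [max_eq_right dist_nonneg]
            exact hN n hn
          have := hδ hdist
          rw [Real.dist_eq] at this
          exact le_of_lt this
        have hbound : ∀ u : G, ‖dist (Ahat u (cs n)) q *
            (w (u * (gs n)⁻¹) - w (u * g⁻¹))‖ ≤ D * (ε / (2 * M)) := by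
          intro u
          rw [norm_mul, Real.norm_eq_abs (dist _ _), abs_of_nonneg dist_nonneg]
          exact mul_le_mul (hD _ _) (hwsmall u) (norm_nonneg _) hD0
        have hcalc : dist (∫ u, dist (Ahat u (cs n)) q *
            (w (u * (gs n)⁻¹) - w (u * g⁻¹)) ∂μ) 0 ≤ (μ Set.univ).toReal * (D * (ε / (2 * M))) := by
          rw [dist_zero_right]
          calc ‖∫ u, dist (Ahat u (cs n)) q * (w (u * (gs n)⁻¹) - w (u * g⁻¹)) ∂μ‖
              ≤ ∫ u, ‖dist (Ahat u (cs n)) q * (w (u * (gs n)⁻¹) - w (u * g⁻¹))‖ ∂μ :=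
                norm_integral_le_integral_norm _
            _ ≤ ∫ _u, D * (ε / (2 * M)) ∂μ :=
                integral_mono ((hen_int n).norm) (integrable_const _) hbound
            _ = (μ Set.univ).toReal * (D * (ε / (2 * M))) := by
                rw [integral_const, smul_eq_mul]
                rfl
        have hfin : (μ Set.univ).toReal * (D * (ε / (2 * M))) < ε := by
          have h2M : (0 : ℝ) < 2 * M := by positivity
          have hr : (0 : ℝ) < ε / (2 * M) := by positivity
          have h1 : (μ Set.univ).toReal * (D * (ε / (2 * M)))
              = (D * (μ Set.univ).toReal) * (ε / (2 * M)) := by ring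
          have h2 : D * (μ Set.univ).toReal ≤ M := by
            rw [hMdef]; linarith
          have h3 : (D * (μ Set.univ).toReal) * (ε / (2 * M)) ≤ M * (ε / (2 * M)) :=
            mul_le_mul_of_nonneg_right h2 (le_of_lt hr)
          have h4 : M * (ε / (2 * M)) = ε / 2 := by
            field_simp
          rw [h1]
          calc (D * (μ Set.univ).toReal) * (ε / (2 * M)) ≤ M * (ε / (2 * M)) := h3
            _ = ε / 2 := h4
            _ < ε := by linarith
        exact lt_of_le_of_lt hcalc hfin
      -- split the integral and combine the limits
      have hsplit : ∀ n, (∫ h, dist (Ahat h (Ahat (gs n) (cs n))) q * w h ∂μ)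
          = (∫ u, dist (Ahat u (cs n)) q * w (u * g⁻¹) ∂μ)
            + ∫ u, dist (Ahat u (cs n)) q * (w (u * (gs n)⁻¹) - w (u * g⁻¹)) ∂μ := by
        intro n
        rw [hchange (cs n) q w (gs n), ← integral_add (hbn_int n) (hen_int n)]
        congr 1
        funext u
        ring
      have T1' : Tendsto (fun n => (∫ u, dist (Ahat u (cs n)) q * w (u * g⁻¹) ∂μ)
          + ∫ u, dist (Ahat u (cs n)) q * (w (u * (gs n)⁻¹) - w (u * g⁻¹)) ∂μ)
          atTop (𝓝 (∫ h, dist (Ahat h d) q * w h ∂μ)) := by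
        simpa only [hsplit] using T1
      have Tsum : Tendsto (fun n => (∫ u, dist (Ahat u (cs n)) q * w (u * g⁻¹) ∂μ)
          + ∫ u, dist (Ahat u (cs n)) q * (w (u * (gs n)⁻¹) - w (u * g⁻¹)) ∂μ)
          atTop (𝓝 ((∫ u, dist (Ahat u c) q * w (u * g⁻¹) ∂μ) + 0)) := T3.add T4
      rw [add_zero] at Tsum
      have hfinal := tendsto_nhds_unique T1' Tsum
      rw [hfinal, ← hchange c q w g]
    -- conclude from main
    set d' : C := Ahat g c with hd'def
    set q : ℕ → C := TopologicalSpace.denseSeq C with hqdef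
    have hq : DenseRange q := TopologicalSpace.denseRange_denseSeq C
    have hae : ∀ j : ℕ, ∀ᵐ h ∂μ, dist (Ahat h d) (q j) = dist (Ahat h d') (q j) := by
      intro j
      set β : G → ℝ := fun h => dist (Ahat h d) (q j) - dist (Ahat h d') (q j) with hβdef
      have hβ_meas : Measurable β :=
        ((hmeas d).dist measurable_const).sub ((hmeas d').dist measurable_const)
      have hβ_bdd : ∀ h, ‖β h‖ ≤ 2 * D := by
        intro h
        have h1 : dist (Ahat h d) (q j) ≤ D := hD _ _
        have h2 : dist (Ahat h d') (q j) ≤ D := hD _ _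
        rw [Real.norm_eq_abs, abs_sub_le_iff]
        constructor <;> nlinarith [dist_nonneg (x := Ahat h d) (y := q j),
          dist_nonneg (x := Ahat h d') (y := q j)]
      obtain ⟨o, ho_cont, ho_lim⟩ := horb d
      obtain ⟨o', ho'_cont, ho'_lim⟩ := horb d'
      set wm : ℕ → G → ℝ := fun m h => dist (o m h) (q j) - dist (o' m h) (q j) with hwmdef
      have hwm_cont : ∀ m, Continuous (wm m) := fun m =>
        ((ho_cont m).dist continuous_const).sub ((ho'_cont m).dist continuous_const)
      have hwm_lim : ∀ h, Tendsto (fun m => wm m h) atTop (𝓝 (β h)) := fun h =>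
        ((ho_lim h).dist tendsto_const_nhds).sub ((ho'_lim h).dist tendsto_const_nhds)
      have hwm_bdd : ∀ m h, ‖wm m h‖ ≤ 2 * D := by
        intro m h
        have h1 : dist (o m h) (q j) ≤ D := hD _ _
        have h2 : dist (o' m h) (q j) ≤ D := hD _ _
        rw [Real.norm_eq_abs, abs_sub_le_iff]
        constructor <;> nlinarith [dist_nonneg (x := o m h) (y := q j),
          dist_nonneg (x := o' m h) (y := q j)]
      have hzero : ∀ m, ∫ h, β h * wm m h ∂μ = 0 := by
        intro m
        have hmain := main (q j) (wm m) (hwm_cont m)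
        have hi1 : Integrable (fun h => dist (Ahat h d) (q j) * wm m h) μ := by
          refine hIntBdd (meas_dw _ _ _ (hwm_cont m).measurable) (K := D * (2 * D)) ?_
          intro h
          rw [norm_mul, Real.norm_eq_abs (dist _ _), abs_of_nonneg dist_nonneg]
          exact mul_le_mul (hD _ _) (hwm_bdd m h) (norm_nonneg _) hD0
        have hi2 : Integrable (fun h => dist (Ahat h d') (q j) * wm m h) μ := by
          refine hIntBdd (meas_dw _ _ _ (hwm_cont m).measurable) (K := D * (2 * D)) ?_
          intro h
          rw [norm_mul, Real.norm_eq_abs (dist _ _), abs_of_nonneg dist_nonneg]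
          exact mul_le_mul (hD _ _) (hwm_bdd m h) (norm_nonneg _) hD0
        have : ∫ h, β h * wm m h ∂μ
            = (∫ h, dist (Ahat h d) (q j) * wm m h ∂μ)
              - ∫ h, dist (Ahat h d') (q j) * wm m h ∂μ := by
          rw [← integral_sub hi1 hi2]
          congr 1
          funext h
          simp only [hβdef]
          ring
        rw [this, hmain, sub_self]
      have hsq : Tendsto (fun m => ∫ h, β h * wm m h ∂μ) atTop
          (𝓝 (∫ h, β h * β h ∂μ)) := by
        refine tendsto_integral_of_dominated_convergence (fun _ => (2 * D) * (2 * D))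
          (fun m => (hβ_meas.mul (hwm_cont m).measurable).aestronglyMeasurable)
          (integrable_const _) (fun m => ae_of_all μ fun h => ?_) (ae_of_all μ fun h => ?_)
        · rw [norm_mul]
          exact mul_le_mul (hβ_bdd h) (hwm_bdd m h) (norm_nonneg _) (by positivity)
        · exact tendsto_const_nhds.mul (hwm_lim h)
      have hzero' : ∫ h, β h * β h ∂μ = 0 := by
        have : Tendsto (fun m => ∫ h, β h * wm m h ∂μ) atTop (𝓝 0) := by
          simp only [hzero]
          exact tendsto_const_nhds
        exact (tendsto_nhds_unique hsq this)
      have hint : Integrable (fun h => β h * β h) μ := by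
        refine hIntBdd (hβ_meas.mul hβ_meas) (K := (2 * D) * (2 * D)) ?_
        intro h
        rw [norm_mul]
        exact mul_le_mul (hβ_bdd h) (hβ_bdd h) (norm_nonneg _) (by positivity)
      have hae0 := (integral_eq_zero_iff_of_nonneg
        (fun h => mul_self_nonneg (β h)) hint).mp hzero'
      filter_upwards [hae0] with h hh
      have : β h = 0 := by
        have : β h * β h = 0 := hh
        exact mul_self_eq_zero.mp this
      simpa [hβdef, sub_eq_zero] using this
    have hall : ∀ᵐ h ∂μ, ∀ j, dist (Ahat h d) (q j) = dist (Ahat h d') (q j) :=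
      ae_all_iff.2 hae
    haveI : (ae μ).NeBot := ae_neBot.2 hμ_ne
    obtain ⟨h₀, hh₀⟩ := hall.exists
    have : Ahat h₀ d = Ahat h₀ d' := eq_of_dist_eq_on_dense hq hh₀
    exact hinj h₀ this
  -- joint continuity via sequences and compactness
  refine continuous_iff_seqContinuous.mpr ?_
  intro u p hu
  apply tendsto_of_subseq_tendsto
  intro ns hns
  obtain ⟨d, ms, hms_mono, hmd⟩ :=
    CompactSpace.tendsto_subseq (fun n => Ahat ((u (ns n)).1) ((u (ns n)).2))
  refine ⟨ms, ?_⟩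
  have hsub : Tendsto (fun n => u (ns (ms n))) atTop (𝓝 p) :=
    hu.comp (hns.comp hms_mono.tendsto_atTop)
  have hgs : Tendsto (fun n => (u (ns (ms n))).1) atTop (𝓝 p.1) :=
    (continuous_fst.tendsto p).comp hsub
  have hcs : Tendsto (fun n => (u (ns (ms n))).2) atTop (𝓝 p.2) :=
    (continuous_snd.tendsto p).comp hsub
  have hmd' : Tendsto (fun n => Ahat ((u (ns (ms n))).1) ((u (ns (ms n))).2))
      atTop (𝓝 d) := hmd
  have hd : d = Ahat p.1 p.2 := key p.1 p.2 _ _ d hgs hcs hmd'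
  simpa only [Function.comp_def] using hd ▸ hmd'
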